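/- arXiv:1010.0311 — 4 statements merged into one kernel-verified Lean document; each statement's English description precedes it below -/
import Mathlib

section
/- Consider the ℓ1-regularized convex problem min_θ {ℓ(θ) + λ||θ||_1} with ℓ convex and differentiable and λ > 0. Suppose there exists an optimal primal solution θ̂ with associated subgradient vector ẑ (satisfying ∇ℓ(θ̂) + λẑ = 0, ẑ_j = sign(θ̂_j) when θ̂_j ≠ 0, |ẑ_j| ≤ 1 otherwise) such that |ẑ_j| < 1 for all j in a set S^c. Then any optimal primal solution θ̃ satisfies θ̃_j = 0 for all j ∈ S^c. -/
open Set RealInnerProductSpace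

lemma grad_ineq {E : Type*} [NormedAddCommGroup E] [InnerProductSpace ℝ E] [CompleteSpace E]
    (f : E → ℝ) (g : E → E) (hconv : ConvexOn ℝ Set.univ f)
    (hgrad : ∀ θ, HasGradientAt f (g θ) θ) (x y : E) :
    f x + ⟪g x, y - x⟫ ≤ f y := by
  set c : ℝ →ᵃ[ℝ] E := AffineMap.lineMap x y with hc
  have hφ : ConvexOn ℝ Set.univ (f ∘ c) := by
    have := hconv.comp_affineMap c
    simpa using this
  have hder : HasDerivAt (f ∘ c) ⟪g x, y - x⟫ 0 := by
    have hcd : HasDerivAt (fun t : ℝ => c t) (y - x) 0 := by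
      simp only [hc, AffineMap.lineMap_apply]
      simpa using ((hasDerivAt_id (0:ℝ)).smul_const (y - x)).add_const x
    have hg : HasFDerivAt f (InnerProductSpace.toDual ℝ E (g (c 0))) (c 0) :=
      (hgrad (c 0))
    have := hg.comp_hasDerivAt 0 hcd
    simpa [hc] using this
  have := hφ.le_slope_of_hasDerivAt (mem_univ 0) (mem_univ 1) one_pos hder
  have hs : slope (f ∘ c) 0 1 = f y - f x := by
    simp [slope_def_field, hc, AffineMap.lineMap_apply]
  rw [hs] at this
  linarith

/-- Shared sparsity of optimal solutions of the ℓ1-regularized convex problem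
`min_θ { ℓ(θ) + λ‖θ‖₁ }`. If there is an optimal primal solution `θ̂` with
subgradient vector `ẑ` (satisfying `∇ℓ(θ̂) + λẑ = 0`, `ẑ_j = sign(θ̂_j)` when
`θ̂_j ≠ 0`, `|ẑ_j| ≤ 1` otherwise) such that `|ẑ_j| < 1` for all `j ∈ Sᶜ`,
then any optimal primal solution `θ̃` satisfies `θ̃_j = 0` for all `j ∈ Sᶜ`. -/
theorem l1_reg_shared_sparsity
    (m : ℕ) (S : Set (Fin m))
    (ℓ : EuclideanSpace ℝ (Fin m) → ℝ)
    (g : EuclideanSpace ℝ (Fin m) → EuclideanSpace ℝ (Fin m))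
    (hconv : ConvexOn ℝ Set.univ ℓ)
    (hgrad : ∀ θ, HasGradientAt ℓ (g θ) θ)
    (lam : ℝ) (hlam : 0 < lam)
    (F : EuclideanSpace ℝ (Fin m) → ℝ)
    (hF : ∀ θ, F θ = ℓ θ + lam * ∑ j, |θ j|)
    (θhat zhat : EuclideanSpace ℝ (Fin m))
    (hstat : g θhat + lam • zhat = 0)
    (hsign : ∀ j, θhat j ≠ 0 → zhat j = Real.sign (θhat j))
    (hbound : ∀ j, |zhat j| ≤ 1)
    (hstrict : ∀ j ∉ S, |zhat j| < 1)
    (hopt : ∀ θ, F θhat ≤ F θ)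
    (θtilde : EuclideanSpace ℝ (Fin m))
    (hopt' : ∀ θ, F θtilde ≤ F θ) :
    ∀ j ∉ S, θtilde j = 0 := by
  -- F values agree
  have hFeq : ℓ θhat + lam * ∑ j, |θhat j| = ℓ θtilde + lam * ∑ j, |θtilde j| := by
    have h1 := hopt θtilde
    have h2 := hopt' θhat
    rw [hF, hF] at h1 h2
    linarith
  -- gradient inequality
  have hgi := grad_ineq ℓ g hconv hgrad θhat θtilde
  -- compute inner product
  have hg0 : g θhat = -(lam • zhat) := by
    have := hstat
    rw [add_eq_zero_iff_eq_neg] at this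
    exact this
  have hinner : ⟪g θhat, θtilde - θhat⟫ =
      -(lam * (∑ j, zhat j * θtilde j - ∑ j, zhat j * θhat j)) := by
    have h1 : ⟪zhat, θtilde - θhat⟫ = ∑ j, zhat j * (θtilde j - θhat j) := by
      simp [PiLp.inner_apply, RCLike.inner_apply]
      exact Finset.sum_congr rfl fun j _ => mul_comm _ _
    have h2 : ∑ j, zhat j * (θtilde j - θhat j)
        = ∑ j, zhat j * θtilde j - ∑ j, zhat j * θhat j := by
      rw [← Finset.sum_sub_distrib]
      exact Finset.sum_congr rfl fun j _ => by ring
    rw [hg0, inner_neg_left, inner_smul_left, h1, h2]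
    simp [starRingEnd_apply]
  -- ∑ zhat j * θhat j = ∑ |θhat j|
  have hzθhat : ∑ j, zhat j * θhat j = ∑ j, |θhat j| := by
    apply Finset.sum_congr rfl
    intro j _
    by_cases h : θhat j = 0
    · simp [h]
    · rw [hsign j h]
      rcases lt_trichotomy (θhat j) 0 with hlt | heq | hgt
      · rw [Real.sign_of_neg hlt, abs_of_neg hlt]; ring
      · exact absurd heq h
      · rw [Real.sign_of_pos hgt, abs_of_pos hgt]; ring
  -- deduce ∑ |θtilde j| ≤ ∑ zhat j * θtilde j
  have hkey : ∑ j, |θtilde j| ≤ ∑ j, zhat j * θtilde j := by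
    rw [hinner, hzθhat] at hgi
    nlinarith
  -- termwise bound
  have hterm : ∀ j, zhat j * θtilde j ≤ |θtilde j| := by
    intro j
    calc zhat j * θtilde j ≤ |zhat j * θtilde j| := le_abs_self _
      _ = |zhat j| * |θtilde j| := abs_mul _ _
      _ ≤ 1 * |θtilde j| := by
          exact mul_le_mul_of_nonneg_right (hbound j) (abs_nonneg _)
      _ = |θtilde j| := one_mul _
  -- sums are equal, so each term equal
  have hsum0 : ∑ j, (|θtilde j| - zhat j * θtilde j) = 0 := by
    rw [Finset.sum_sub_distrib]
    have := Finset.sum_le_sum (s := Finset.univ) (fun j _ => hterm j)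
    linarith
  have hall : ∀ j ∈ Finset.univ, |θtilde j| - zhat j * θtilde j = 0 := by
    rw [← Finset.sum_eq_zero_iff_of_nonneg (fun j _ => by linarith [hterm j])]
    exact hsum0
  intro j hj
  by_contra hne
  have habs : (0:ℝ) < |θtilde j| := abs_pos.mpr hne
  have heq : |θtilde j| = zhat j * θtilde j := by
    have := hall j (Finset.mem_univ j)
    linarith
  have : zhat j * θtilde j ≤ |zhat j| * |θtilde j| :=
    (le_abs_self _).trans_eq (abs_mul _ _)
  have hlt : |zhat j| * |θtilde j| < 1 * |θtilde j| :=
    mul_lt_mul_of_pos_right (hstrict j hj) habs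
  rw [one_mul] at hlt
  linarith
end

section
/- Consider the ℓ1-regularized convex problem min_θ {ℓ(θ) + λ||θ||_1} with ℓ convex and twice differentiable. Suppose there exists an optimal solution θ̂ with subgradient ẑ satisfying |ẑ_j| < 1 for all j ∈ S^c (so all optimal solutions vanish on S^c), and suppose further the Hessian submatrix [∇²ℓ(θ̂)]_{SS} is strictly positive definite. Then θ̂ is the unique optimal solution. -/
set_option maxHeartbeats 1000000

open scoped RealInnerProductSpace

lemma l1_sign_mul_self (x : ℝ) : Real.sign x * x = |x| := by
  rcases lt_trichotomy x 0 with h|h|h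
  · rw [Real.sign_of_neg h, abs_of_neg h]; ring
  · simp [h]
  · rw [Real.sign_of_pos h, abs_of_pos h]; ring

/-- Uniqueness of the optimal solution of the ℓ1-regularized convex problem.
If there is an optimal solution `θ̂` with subgradient `ẑ` satisfying strict dual
feasibility `|ẑ_j| < 1` on `Sᶜ`, and the Hessian of `ℓ` at `θ̂` is strictly positive
definite on the coordinates in `S`, then `θ̂` is the unique optimal solution. -/
theorem l1_reg_unique_solution
    (m : ℕ) (S : Set (Fin m))
    (ℓ : EuclideanSpace ℝ (Fin m) → ℝ)
    (g : EuclideanSpace ℝ (Fin m) → EuclideanSpace ℝ (Fin m))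
    (H : EuclideanSpace ℝ (Fin m) →
          EuclideanSpace ℝ (Fin m) →L[ℝ] EuclideanSpace ℝ (Fin m))
    (hconv : ConvexOn ℝ Set.univ ℓ)
    (hgrad : ∀ θ, HasGradientAt ℓ (g θ) θ)
    (hhess : ∀ θ, HasFDerivAt g (H θ) θ)
    (hcont : Continuous fun θ => H θ)
    (lam : ℝ) (hlam : 0 < lam)
    (F : EuclideanSpace ℝ (Fin m) → ℝ)
    (hF : ∀ θ, F θ = ℓ θ + lam * ∑ j, |θ j|)
    (θhat zhat : EuclideanSpace ℝ (Fin m))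
    (hstat : g θhat + lam • zhat = 0)
    (hsign : ∀ j, θhat j ≠ 0 → zhat j = Real.sign (θhat j))
    (hbound : ∀ j, |zhat j| ≤ 1)
    (hstrict : ∀ j ∉ S, |zhat j| < 1)
    (hposdef : ∀ v : EuclideanSpace ℝ (Fin m),
        (∀ j ∉ S, v j = 0) → v ≠ 0 → 0 < (inner ℝ v (H θhat v) : ℝ))
    (hopt : ∀ θ, F θhat ≤ F θ) :
    ∀ θtilde : EuclideanSpace ℝ (Fin m), (∀ θ, F θtilde ≤ F θ) → θtilde = θhat := by
  intro θt hoptt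
  by_contra hne
  have hFeq : F θt = F θhat := le_antisymm (hoptt θhat) (hopt θt)
  set v : EuclideanSpace ℝ (Fin m) := θt - θhat with hv
  have hvne : v ≠ 0 := sub_ne_zero.mpr hne
  set L : ℝ → EuclideanSpace ℝ (Fin m) := fun t => θhat + t • v with hLdef
  have hL0 : L 0 = θhat := by simp [hLdef]
  have hL1 : L 1 = θt := by simp [hLdef, hv]
  have hLd : ∀ t : ℝ, HasDerivAt L v t := fun t => by
    have := ((hasDerivAt_id t).smul_const v).const_add θhat
    rw [one_smul] at this; exact this
  -- φ derivative
  have hφd : ∀ t : ℝ, HasDerivAt (fun s => ℓ (L s)) (⟪g (L t), v⟫) t := by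
    intro t
    have := (hgrad (L t)).hasFDerivAt.comp_hasDerivAt t (hLd t)
    simp [InnerProductSpace.toDual_apply_apply] at this; exact this
  -- ψ derivative
  have hψd : ∀ t : ℝ, HasDerivAt (fun s => (⟪g (L s), v⟫ : ℝ)) (⟪H (L t) v, v⟫) t := by
    intro t
    have h1 : HasDerivAt (fun s => g (L s)) (H (L t) v) t :=
      (hhess (L t)).comp_hasDerivAt t (hLd t)
    simpa using h1.inner ℝ (hasDerivAt_const t v)
  -- convexity of φ
  have hLaff : ∀ t : ℝ, L t = (1 - t) • θhat + t • θt := by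
    intro t
    rw [hLdef]
    simp only [hv, sub_smul, one_smul, smul_sub]
    abel
  have hφconv : ConvexOn ℝ Set.univ (fun s => ℓ (L s)) := by
    have := hconv.comp_affineMap (AffineMap.lineMap θhat θt : ℝ →ᵃ[ℝ] _)
    have heq : (fun s => ℓ (L s)) = ℓ ∘ (AffineMap.lineMap θhat θt : ℝ →ᵃ[ℝ] _) := by
      funext s
      simp [Function.comp, AffineMap.lineMap_apply, hLdef, hv]
      rw [add_comm]
    rw [heq]
    simpa using this
  -- gradient inequality: ℓ θt ≥ ℓ θhat + ⟪g θhat, v⟫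
  have hgradineq : ⟪g θhat, v⟫ ≤ ℓ θt - ℓ θhat := by
    have := hφconv.le_slope_of_hasDerivAt (Set.mem_univ 0) (Set.mem_univ 1)
      one_pos (hφd 0)
    rw [hL0] at this
    simpa [slope_def_field, hL0, hL1] using this
  -- stationarity
  have hgθ : g θhat = -(lam • zhat) := eq_neg_of_add_eq_zero_left hstat
  have hzv : (⟪g θhat, v⟫ : ℝ)
      = -(lam * ((∑ j, zhat j * θt j) - ∑ j, zhat j * θhat j)) := by
    rw [hgθ, inner_neg_left, real_inner_smul_left]
    simp only [hv, PiLp.inner_apply, RCLike.inner_apply, conj_trivial, PiLp.sub_apply]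
    rw [← Finset.sum_sub_distrib]
    ring_nf
    congr 1; congr 1; exact Finset.sum_congr rfl fun x _ => by ring
  have hzhat_hat : ∀ j, zhat j * θhat j = |θhat j| := by
    intro j
    by_cases h : θhat j = 0
    · simp [h]
    · rw [hsign j h, l1_sign_mul_self]
  have hterm_nonneg : ∀ j, 0 ≤ |θt j| - zhat j * θt j := by
    intro j
    have h1 : zhat j * θt j ≤ |zhat j * θt j| := le_abs_self _
    have h2 : |zhat j * θt j| = |zhat j| * |θt j| := abs_mul _ _
    nlinarith [hbound j, abs_nonneg (θt j)]
  have hFt := hF θt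
  have hFh := hF θhat
  have hsum0 : ∀ j ∈ Finset.univ, |θt j| - zhat j * θt j = 0 := by
    have hD : (∑ j, zhat j * θhat j) = ∑ j, |θhat j| :=
      Finset.sum_congr rfl fun j _ => hzhat_hat j
    have hsum : ∑ j, (|θt j| - zhat j * θt j) ≤ 0 := by
      rw [Finset.sum_sub_distrib]
      have h4 : ℓ θt + lam * ∑ j, |θt j| = ℓ θhat + lam * ∑ j, |θhat j| := by
        rw [← hFt, ← hFh, hFeq]
      rw [hzv, hD] at hgradineq
      have hle : lam * ((∑ j, |θt j|) - ∑ j, zhat j * θt j) ≤ 0 := by nlinarith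
      nlinarith
    intro j _
    have := Finset.sum_eq_zero_iff_of_nonneg (fun j _ => hterm_nonneg j) |>.mp
      (le_antisymm hsum (Finset.sum_nonneg fun j _ => hterm_nonneg j))
    exact this j (Finset.mem_univ j)
  have hθtS : ∀ j ∉ S, θt j = 0 := by
    intro j hj
    by_contra h
    have h1 := hsum0 j (Finset.mem_univ j)
    have h2 : zhat j * θt j ≤ |zhat j| * |θt j| := by
      calc zhat j * θt j ≤ |zhat j * θt j| := le_abs_self _
        _ = |zhat j| * |θt j| := abs_mul _ _
    have h3 : |zhat j| * |θt j| < 1 * |θt j| :=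
      mul_lt_mul_of_pos_right (hstrict j hj) (abs_pos.mpr h)
    nlinarith
  have hθhS : ∀ j ∉ S, θhat j = 0 := by
    intro j hj
    by_contra h
    have h1 := hsign j h
    have h2 : |zhat j| = 1 := by
      rw [h1]
      rcases lt_trichotomy (θhat j) 0 with hc|hc|hc
      · rw [Real.sign_of_neg hc]; norm_num
      · exact absurd hc h
      · rw [Real.sign_of_pos hc]; norm_num
    linarith [hstrict j hj]
  have hvS : ∀ j ∉ S, v j = 0 := by
    intro j hj
    simp [hv, PiLp.sub_apply, hθtS j hj, hθhS j hj]
  -- ℓ is affine along the segment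
  have hφaff : ∀ t ∈ Set.Icc (0:ℝ) 1, ℓ (L t) = (1 - t) * ℓ θhat + t * ℓ θt := by
    intro t ht
    have hℓle : ℓ (L t) ≤ (1 - t) * ℓ θhat + t * ℓ θt := by
      have := hconv.2 (Set.mem_univ θhat) (Set.mem_univ θt)
        (by linarith [ht.2] : (0:ℝ) ≤ 1 - t) ht.1 (by ring)
      rw [hLaff t]
      simpa [smul_eq_mul] using this
    have hn1 : ∑ j, |L t j| ≤ (1 - t) * ∑ j, |θhat j| + t * ∑ j, |θt j| := by
      rw [hLaff t]
      calc ∑ j, |((1 - t) • θhat + t • θt) j|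
          ≤ ∑ j, ((1 - t) * |θhat j| + t * |θt j|) := by
            apply Finset.sum_le_sum
            intro j _
            simp only [PiLp.add_apply, PiLp.smul_apply, smul_eq_mul]
            calc |(1 - t) * θhat j + t * θt j|
                ≤ |(1 - t) * θhat j| + |t * θt j| := abs_add_le _ _
              _ = (1 - t) * |θhat j| + t * |θt j| := by
                  rw [abs_mul, abs_mul, abs_of_nonneg (by linarith [ht.2] : (0:ℝ) ≤ 1 - t),
                    abs_of_nonneg ht.1]
        _ = (1 - t) * ∑ j, |θhat j| + t * ∑ j, |θt j| := by
            rw [Finset.sum_add_distrib, ← Finset.mul_sum, ← Finset.mul_sum]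
    have h3 : F θhat ≤ F (L t) := hopt _
    rw [hF, hF] at h3
    have h4 : ℓ θt + lam * ∑ j, |θt j| = ℓ θhat + lam * ∑ j, |θhat j| := by
      rw [← hFt, ← hFh, hFeq]
    refine le_antisymm hℓle ?_
    nlinarith [mul_le_mul_of_nonneg_left hn1 hlam.le, ht.1, ht.2]
  -- derivative of φ is constant on (0,1)
  set c : ℝ := ℓ θt - ℓ θhat with hc
  have hψc : ∀ t ∈ Set.Ioo (0:ℝ) 1, (⟪g (L t), v⟫ : ℝ) = c := by
    intro t ht
    have hev : (fun s => ℓ (L s)) =ᶠ[nhds t] (fun s => ℓ θhat + s * c) := by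
      filter_upwards [Ioo_mem_nhds ht.1 ht.2] with s hs
      rw [hφaff s (Set.mem_Icc_of_Ioo hs), hc]; ring
    have haffd : HasDerivAt (fun s => ℓ θhat + s * c) c t := by
      simpa using ((hasDerivAt_id t).mul_const c).const_add (ℓ θhat)
    exact ((hφd t).congr_of_eventuallyEq hev.symm).unique haffd
  have hHzero : ∀ t ∈ Set.Ioo (0:ℝ) 1, (⟪H (L t) v, v⟫ : ℝ) = 0 := by
    intro t ht
    have hev : (fun s => (⟪g (L s), v⟫ : ℝ)) =ᶠ[nhds t] (fun _ => c) := by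
      filter_upwards [Ioo_mem_nhds ht.1 ht.2] with s hs using hψc s hs
    exact ((hψd t).congr_of_eventuallyEq hev.symm).unique (hasDerivAt_const t c)
  have hLcont : Continuous L := by
    simp only [hLdef]
    exact continuous_const.add (continuous_id.smul continuous_const)
  have hhcont : Continuous (fun t => (⟪H (L t) v, v⟫ : ℝ)) :=
    ((hcont.comp hLcont).clm_apply continuous_const).inner continuous_const
  have h0 : (⟪H θhat v, v⟫ : ℝ) = 0 := by
    have hmem : (0:ℝ) ∈ closure (Set.Ioo (0:ℝ) 1) := by
      rw [closure_Ioo (by norm_num : (0:ℝ) ≠ 1)]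
      exact ⟨le_refl 0, zero_le_one⟩
    have hne' : (nhdsWithin (0:ℝ) (Set.Ioo 0 1)).NeBot :=
      mem_closure_iff_nhdsWithin_neBot.mp hmem
    have ht1 : Filter.Tendsto (fun t => (⟪H (L t) v, v⟫ : ℝ))
        (nhdsWithin 0 (Set.Ioo 0 1)) (nhds (⟪H (L 0) v, v⟫ : ℝ)) :=
      (hhcont.tendsto 0).mono_left nhdsWithin_le_nhds
    have ht2 : Filter.Tendsto (fun t => (⟪H (L t) v, v⟫ : ℝ))
        (nhdsWithin 0 (Set.Ioo 0 1)) (nhds 0) := by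
      refine Filter.Tendsto.congr' ?_ tendsto_const_nhds
      exact (eventually_nhdsWithin_of_forall hHzero).mono fun x h => h.symm
    have := tendsto_nhds_unique ht1 ht2
    rwa [hL0] at this
  have hpos := hposdef v hvS hvne
  rw [real_inner_comm] at hpos
  linarith
end

section
/- Suppose ẑ_{S^c} satisfies λ ẑ_{S^c} = [W_{S^c} − R_{S^c}] − Q^n_{S^cS}(Q^n_{SS})^{-1}[W_S − R_S] + λ Q^n_{S^cS}(Q^n_{SS})^{-1} ẑ_S, where |||Q^n_{S^cS}(Q^n_{SS})^{-1}|||_∞ ≤ 1−α, ||ẑ_S||_∞ ≤ 1, ||W||_∞/λ ≤ α/(4(2−α)), and ||R||_∞/λ ≤ α/(4(2−α)). Then ||ẑ_{S^c}||_∞ ≤ 1 − α/2 < 1. -/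
open Matrix

/-- The ℓ∞ matrix operator norm (maximum absolute row sum). -/
noncomputable def linfMatNorm {m n : ℕ} (A : Matrix (Fin m) (Fin n) ℝ) : ℝ :=
  ⨆ j, ∑ k, |A j k|

/-- Strict dual feasibility: if `λẑ_{Sᶜ} = [W_{Sᶜ} − R_{Sᶜ}] − M[W_S − R_S] + λ M ẑ_S`
with `M = Qⁿ_{SᶜS}(Qⁿ_{SS})⁻¹`, `|||M|||_∞ ≤ 1−α`, `‖ẑ_S‖_∞ ≤ 1`,
`‖W‖_∞/λ ≤ α/(4(2−α))` and `‖R‖_∞/λ ≤ α/(4(2−α))`, then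
`‖ẑ_{Sᶜ}‖_∞ ≤ 1 − α/2 < 1`. -/
theorem strict_dual_feasibility
    (d m : ℕ) (α lam : ℝ) (hα : α ∈ Set.Ioc (0 : ℝ) 1) (hlam : 0 < lam)
    (QnSS : Matrix (Fin d) (Fin d) ℝ) (hQnInv : IsUnit QnSS.det)
    (QnCS : Matrix (Fin m) (Fin d) ℝ)
    (hM : linfMatNorm (QnCS * QnSS⁻¹) ≤ 1 - α)
    (WS RS zS : Fin d → ℝ) (WC RC zC : Fin m → ℝ)
    (hzS : ∀ k, |zS k| ≤ 1)
    (hW : ∀ k, |WS k| / lam ≤ α / (4 * (2 - α)))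
    (hWc : ∀ j, |WC j| / lam ≤ α / (4 * (2 - α)))
    (hR : ∀ k, |RS k| / lam ≤ α / (4 * (2 - α)))
    (hRc : ∀ j, |RC j| / lam ≤ α / (4 * (2 - α)))
    (heq : lam • zC =
      (WC - RC) - (QnCS * QnSS⁻¹).mulVec (WS - RS)
        + lam • (QnCS * QnSS⁻¹).mulVec zS) :
    (∀ j, |zC j| ≤ 1 - α / 2) ∧ 1 - α / 2 < 1 := by

  obtain ⟨hα0, hα1⟩ := hα
  have h2α : (0:ℝ) < 2 - α := by linarith
  set c := α / (4 * (2 - α)) with hc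
  have hc0 : 0 ≤ c := by positivity
  have hceq : c * (2 - α) = α / 4 := by
    rw [hc]; field_simp
  set M := QnCS * QnSS⁻¹ with hMdef
  have hrow : ∀ j, ∑ k, |M j k| ≤ 1 - α := by
    intro j
    unfold linfMatNorm at hM
    exact le_trans (le_ciSup (f := fun j => ∑ k, |M j k|) (Set.Finite.bddAbove (Set.finite_range _)) j) hM
  have hmv : ∀ (v : Fin d → ℝ) (B : ℝ), 0 ≤ B → (∀ k, |v k| ≤ B) →
      ∀ j, |(M.mulVec v) j| ≤ (1 - α) * B := by
    intro v B hB hv j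
    have h1 : |(M.mulVec v) j| ≤ ∑ k, |M j k| * B := by
      rw [mulVec, dotProduct]
      refine (Finset.abs_sum_le_sum_abs _ _).trans ?_
      exact Finset.sum_le_sum fun k _ => by
        rw [abs_mul]; exact mul_le_mul_of_nonneg_left (hv k) (abs_nonneg _)
    calc |(M.mulVec v) j| ≤ (∑ k, |M j k|) * B := by rw [Finset.sum_mul]; exact h1
      _ ≤ (1 - α) * B := mul_le_mul_of_nonneg_right (hrow j) hB
  refine ⟨fun j => ?_, by linarith⟩
  have hWCj : |WC j| ≤ c * lam := (div_le_iff₀ hlam).1 (hWc j)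
  have hRCj : |RC j| ≤ c * lam := (div_le_iff₀ hlam).1 (hRc j)
  have hWR : ∀ k, |(WS - RS) k| ≤ 2 * (c * lam) := by
    intro k
    have h1 : |WS k| ≤ c * lam := (div_le_iff₀ hlam).1 (hW k)
    have h2 : |RS k| ≤ c * lam := (div_le_iff₀ hlam).1 (hR k)
    calc |(WS - RS) k| = |WS k - RS k| := rfl
      _ ≤ |WS k| + |RS k| := abs_sub _ _
      _ ≤ 2 * (c * lam) := by linarith
  have hb1 := hmv (WS - RS) (2 * (c * lam)) (by positivity) hWR j
  have hb2 := hmv zS 1 zero_le_one hzS j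
  have he := congrFun heq j
  simp only [Pi.smul_apply, Pi.add_apply, Pi.sub_apply, smul_eq_mul] at he
  have hkey : lam * |zC j| ≤ lam * (1 - α / 2) := by
    have : |lam * zC j| ≤ c * lam + c * lam + (1 - α) * (2 * (c * lam))
        + lam * ((1 - α) * 1) := by
      rw [he]
      calc |WC j - RC j - M.mulVec (WS - RS) j + lam * M.mulVec zS j|
          ≤ |WC j - RC j - M.mulVec (WS - RS) j| + |lam * M.mulVec zS j| :=
            abs_add_le _ _
        _ ≤ |WC j - RC j| + |M.mulVec (WS - RS) j| + |lam * M.mulVec zS j| := by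
            have := abs_sub (WC j - RC j) (M.mulVec (WS - RS) j); linarith
        _ ≤ (|WC j| + |RC j|) + |M.mulVec (WS - RS) j| + |lam * M.mulVec zS j| := by
            have := abs_sub (WC j) (RC j); linarith
        _ ≤ c * lam + c * lam + (1 - α) * (2 * (c * lam)) + lam * ((1 - α) * 1) := by
            rw [abs_mul, abs_of_pos hlam]
            have := mul_le_mul_of_nonneg_left hb2 hlam.le
            linarith
    rw [abs_mul, abs_of_pos hlam] at this
    nlinarith [hceq, hlam.le, hc0]
  exact le_of_mul_le_mul_left hkey hlam
end

section
/- Let G(u) = W^T u + u^T H u + λ(||θ* + u||_1 − ||θ*||_1) for u ∈ R^d, where ||W||_∞ ≤ λ/4, λ_min(H) ≥ C_min/2 with C_min > 0, and ||·||_1 is the ℓ1 norm. Then for any u with ||u||_2 = Mλ√d where M = 5/C_min, G(u) ≥ (λ√d)²(−M/4 + (C_min/2)M² − M) > 0. -/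
open Matrix

/-- Strict positivity of `G(u) = Wᵀu + uᵀHu + λ(‖θ*+u‖₁ − ‖θ*‖₁)` on the sphere of
radius `Mλ√d` with `M = 5/C_min`: `G(u) ≥ (λ√d)²(−M/4 + (C_min/2)M² − M) > 0`,
assuming `‖W‖_∞ ≤ λ/4` and `λ_min(H) ≥ C_min/2`. -/
theorem G_positive_on_sphere
    (d : ℕ) (hd : 1 ≤ d) (Cmin lam : ℝ) (hC : 0 < Cmin) (hlam : 0 < lam)
    (W θstar : Fin d → ℝ)
    (hW : ∀ j, |W j| ≤ lam / 4)
    (H : Matrix (Fin d) (Fin d) ℝ) (hH : H.IsSymm)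
    (hHmin : ∀ v : Fin d → ℝ, Cmin / 2 * (∑ i, v i ^ 2) ≤ v ⬝ᵥ H.mulVec v)
    (G : (Fin d → ℝ) → ℝ)
    (hG : ∀ u, G u = (∑ j, W j * u j) + u ⬝ᵥ H.mulVec u
        + lam * ((∑ j, |θstar j + u j|) - ∑ j, |θstar j|))
    (M : ℝ) (hM : M = 5 / Cmin)
    (u : Fin d → ℝ)
    (hu : Real.sqrt (∑ j, u j ^ 2) = M * lam * Real.sqrt d) :
    G u ≥ (lam * Real.sqrt d) ^ 2 * (-(M / 4) + Cmin / 2 * M ^ 2 - M) ∧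
    0 < (lam * Real.sqrt d) ^ 2 * (-(M / 4) + Cmin / 2 * M ^ 2 - M) := by
  have hd0 : (0:ℝ) < d := by exact_mod_cast hd
  have hsd : 0 < Real.sqrt d := Real.sqrt_pos.mpr hd0
  have hM0 : 0 < M := by rw [hM]; positivity
  have hS0 : 0 ≤ ∑ j, u j ^ 2 := Finset.sum_nonneg fun i _ => sq_nonneg _
  have hS : ∑ j, u j ^ 2 = (M * lam * Real.sqrt d) ^ 2 := by
    rw [← hu, Real.sq_sqrt hS0]
  -- ℓ1 vs ℓ2
  have hsum1 : ∑ j, |u j| ≤ Real.sqrt d * (M * lam * Real.sqrt d) := by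
    have h := sq_sum_le_card_mul_sum_sq (s := Finset.univ) (f := fun j => |u j|)
    simp only [Finset.card_univ, Fintype.card_fin, sq_abs] at h
    have hsq : (∑ j, |u j|) ^ 2 ≤ (Real.sqrt d * (M * lam * Real.sqrt d)) ^ 2 := by
      have : (Real.sqrt d * (M * lam * Real.sqrt d)) ^ 2
          = (d : ℝ) * (M * lam * Real.sqrt d) ^ 2 := by
        rw [mul_pow, Real.sq_sqrt hd0.le]
      rw [this, ← hS]
      exact_mod_cast h
    have h1 : 0 ≤ ∑ j, |u j| := Finset.sum_nonneg fun i _ => abs_nonneg _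
    have h2 : 0 ≤ Real.sqrt d * (M * lam * Real.sqrt d) := by positivity
    nlinarith
  -- bound on W term
  have hWterm : -(lam / 4 * (Real.sqrt d * (M * lam * Real.sqrt d))) ≤ ∑ j, W j * u j := by
    have habs : |∑ j, W j * u j| ≤ lam / 4 * (Real.sqrt d * (M * lam * Real.sqrt d)) := by
      calc |∑ j, W j * u j| ≤ ∑ j, |W j * u j| := Finset.abs_sum_le_sum_abs _ _
        _ ≤ ∑ j, lam / 4 * |u j| := by
            refine Finset.sum_le_sum fun j _ => ?_
            rw [abs_mul]
            exact mul_le_mul_of_nonneg_right (hW j) (abs_nonneg _)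
        _ = lam / 4 * ∑ j, |u j| := by rw [Finset.mul_sum]
        _ ≤ lam / 4 * (Real.sqrt d * (M * lam * Real.sqrt d)) := by
            exact mul_le_mul_of_nonneg_left hsum1 (by positivity)
    linarith [neg_abs_le (∑ j, W j * u j), habs]
  -- ℓ1 penalty bound
  have hpen : (∑ j, |θstar j + u j|) - ∑ j, |θstar j| ≥ -(∑ j, |u j|) := by
    have h : ∀ j : Fin d, |θstar j| - |u j| ≤ |θstar j + u j| := by
      intro j
      have h0 := abs_sub_abs_le_abs_sub (θstar j) (θstar j + u j)
      have h1 : θstar j - (θstar j + u j) = -u j := by ring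
      rw [h1, abs_neg] at h0
      linarith
    have hsum := Finset.sum_le_sum (fun j (_ : j ∈ Finset.univ) => h j)
    rw [Finset.sum_sub_distrib] at hsum
    linarith
  have hpen' : lam * ((∑ j, |θstar j + u j|) - ∑ j, |θstar j|)
      ≥ -(lam * (Real.sqrt d * (M * lam * Real.sqrt d))) := by
    have h1 : lam * ((∑ j, |θstar j + u j|) - ∑ j, |θstar j|) ≥ lam * (-(∑ j, |u j|)) :=
      mul_le_mul_of_nonneg_left hpen hlam.le
    have h2 : lam * (-(∑ j, |u j|)) ≥ -(lam * (Real.sqrt d * (M * lam * Real.sqrt d))) := by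
      have := mul_le_mul_of_nonneg_left hsum1 hlam.le
      linarith
    linarith
  -- quadratic term
  have hquad : Cmin / 2 * (M * lam * Real.sqrt d) ^ 2 ≤ u ⬝ᵥ H.mulVec u := by
    have := hHmin u
    rwa [hS] at this
  have hd2 : Real.sqrt d * Real.sqrt d = (d : ℝ) :=
    Real.mul_self_sqrt hd0.le
  constructor
  · rw [hG u]
    have key : -(lam / 4 * (Real.sqrt d * (M * lam * Real.sqrt d)))
        + Cmin / 2 * (M * lam * Real.sqrt d) ^ 2
        - lam * (Real.sqrt d * (M * lam * Real.sqrt d))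
        = (lam * Real.sqrt d) ^ 2 * (-(M / 4) + Cmin / 2 * M ^ 2 - M) := by ring
    linarith [hWterm, hquad, hpen']
  · have hcoef : -(M / 4) + Cmin / 2 * M ^ 2 - M = 25 / (4 * Cmin) := by
      rw [hM]; field_simp; ring
    rw [hcoef]
    positivity
end
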